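/- Define F(n,s) recursively by F(1,1) = 1, F(n,0) = 0 for n ≥ 1, and F(n,s) = Σ_{j=0}^{n-s} C(n-s, j)·F(n-1, s+j-1) for 1 ≤ s ≤ n. Then F(n,s) = s·n^(n-s-1) for all 1 ≤ s ≤ n. -/

import Mathlib

lemma key1 (x : ℚ) (m : ℕ) :
    ∑ j ∈ Finset.range (m+1), (Nat.choose m j : ℚ) * x^(m-j) = (x+1)^m := by
  rw [add_comm x 1, add_pow]
  exact Finset.sum_congr rfl (fun j _ => by ring)

lemma key2 (x : ℚ) (m : ℕ) :
    ∑ j ∈ Finset.range (m+1), (Nat.choose m j : ℚ) * j * x^(m-j) = m * (x+1)^(m-1) := by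
  cases m with
  | zero => simp
  | succ k =>
    rw [Finset.sum_range_succ']
    simp only [Nat.cast_zero, mul_zero, zero_mul, add_zero]
    have : ∀ j ∈ Finset.range (k+1),
        (Nat.choose (k+1) (j+1) : ℚ) * ((j+1 : ℕ) : ℚ) * x^(k+1-(j+1))
        = (k+1 : ℚ) * ((Nat.choose k j : ℚ) * x^(k-j)) := by
      intro j _
      have h' : ((k+1) * Nat.choose k j : ℚ) = (Nat.choose (k+1) (j+1) : ℚ) * ((j+1 : ℕ) : ℚ) := by
        exact_mod_cast congrArg (Nat.cast : ℕ → ℚ) (Nat.add_one_mul_choose_eq k j)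
      have he : k + 1 - (j+1) = k - j := by omega
      rw [he, ← h']
      ring
    rw [Finset.sum_congr rfl this, ← Finset.mul_sum, key1]
    simp

lemma key3 (x : ℚ) (m s : ℕ) :
    ∑ j ∈ Finset.range (m+1), (Nat.choose m j : ℚ) * ((s:ℚ) + j - 1) * x^(m-j)
      = ((s:ℚ) - 1) * (x+1)^m + m * (x+1)^(m-1) := by
  have : ∀ j ∈ Finset.range (m+1),
      (Nat.choose m j : ℚ) * ((s:ℚ) + j - 1) * x^(m-j)
      = ((s:ℚ) - 1) * ((Nat.choose m j : ℚ) * x^(m-j))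
        + (Nat.choose m j : ℚ) * j * x^(m-j) := by
    intro j _; ring
  rw [Finset.sum_congr rfl this, Finset.sum_add_distrib, ← Finset.mul_sum, key1, key2]

theorem stmt7 (F : ℕ → ℕ → ℚ)
    (h1 : F 1 1 = 1)
    (h0 : ∀ n : ℕ, 1 ≤ n → F n 0 = 0)
    (hrec : ∀ n s : ℕ, 1 ≤ s → s ≤ n →
      F n s = ∑ j ∈ Finset.range (n - s + 1), (Nat.choose (n - s) j : ℚ) * F (n - 1) (s + j - 1)) :
    ∀ n s : ℕ, 1 ≤ s → s ≤ n →
      F n s = (s : ℚ) * (n : ℚ) ^ ((n : ℤ) - (s : ℤ) - 1) := by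
  intro n
  induction n with
  | zero => intro s hs hsn; omega
  | succ n ih =>
    intro s hs hsn
    rcases Nat.eq_zero_or_pos n with hn0 | hn1
    · subst hn0
      interval_cases s
      simpa using h1
    -- n ≥ 1
    have hx : (n:ℚ) ≠ 0 := Nat.cast_ne_zero.mpr (by omega)
    have hFt : ∀ t : ℕ, t ≤ n → F n t = (t:ℚ) * (n:ℚ) ^ ((n:ℤ) - t - 1) := by
      intro t ht
      rcases Nat.eq_zero_or_pos t with h | h
      · subst h; simp [h0 n hn1]
      · exact ih t h ht
    set m := n + 1 - s with hm
    have hms : s + m = n + 1 := by omega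
    have hrw : F (n+1) s = ∑ j ∈ Finset.range (m+1),
        (Nat.choose m j : ℚ) * F n (s + j - 1) := by
      have := hrec (n+1) s hs hsn
      simpa [hm] using this
    rw [hrw]
    have hterm : ∀ j ∈ Finset.range (m+1),
        (Nat.choose m j : ℚ) * F n (s + j - 1)
        = ((Nat.choose m j : ℚ) * ((s:ℚ) + j - 1) * (n:ℚ)^(m-j)) * (n:ℚ)⁻¹ := by
      intro j hj
      rw [Finset.mem_range] at hj
      have hjm : j ≤ m := by omega
      have h1' : s + j - 1 ≤ n := by omega
      rw [hFt (s + j - 1) h1']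
      have hc : ((s + j - 1 : ℕ) : ℚ) = (s:ℚ) + j - 1 := by
        have : ((s + j - 1 : ℕ) : ℚ) = ((s + j : ℕ) : ℚ) - 1 := by
          rw [Nat.cast_sub (by omega)]; simp
        rw [this]; push_cast; ring
      have hexp : (n:ℤ) - ((s + j - 1 : ℕ) : ℤ) - 1 = ((m - j : ℕ) : ℤ) - 1 := by
        omega
      rw [hc, hexp]
      have : (n:ℚ) ^ (((m - j : ℕ) : ℤ) - 1) = (n:ℚ)^(m-j) * (n:ℚ)⁻¹ := by
        rw [zpow_sub₀ hx, zpow_natCast, zpow_one]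
        ring
      rw [this]
      ring
    rw [Finset.sum_congr rfl hterm, ← Finset.sum_mul, key3]
    -- now pure algebra: ((s-1)(n+1)^m + m (n+1)^(m-1)) / n = s (n+1)^(n+1-s-1 : ℤ)
    have hy : ((n:ℚ) + 1) ≠ 0 := by positivity
    have hexp2 : ((n:ℤ) + 1) - (s:ℤ) - 1 = ((m : ℕ) : ℤ) - 1 := by omega
    have hcast : ((n:ℕ):ℚ) + 1 = ((n+1 : ℕ) : ℚ) := by push_cast; ring
    push_cast [hexp2]
    clear_value m
    cases m with
    | zero =>
      have hs' : (s:ℚ) = (n:ℚ) + 1 := by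
        have h : s = n + 1 := by omega
        rw [h]; push_cast; ring
      have he : ((0:ℕ):ℤ) - 1 = -1 := by simp
      rw [he, hs']
      simp only [pow_zero, Nat.cast_zero, zero_mul, add_zero, mul_one, zpow_neg_one]
      field_simp
      ring
    | succ k =>
      have hsq : (s:ℚ) + ((k:ℚ)+1) = (n:ℚ)+1 := by
        have h : s + (k+1) = n + 1 := by omega
        exact_mod_cast congrArg (Nat.cast : ℕ → ℚ) h
      have he : ((k+1:ℕ):ℤ) - 1 = (k:ℤ) := by push_cast; ring
      rw [he, zpow_natCast]
      have hk : k + 1 - 1 = k := rfl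
      rw [hk]
      field_simp
      push_cast; linear_combination ((n:ℚ)+1)^k * hsq
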